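/- Let C be a local identifying code in F_2^n and let c be a codeword with I(c) = {c}. Then the share of c satisfies s(c) ≤ 1 + n/2. -/

import Mathlib

open SimpleGraph

/-- The closed neighbourhood of a vertex. -/
def cnbr {V : Type*} (G : SimpleGraph V) (u : V) : Set V := insert u (G.neighborSet u)

/-- The `I`-set of a vertex with respect to a code `C`. -/
def iset {V : Type*} (G : SimpleGraph V) (C : Set V) (u : V) : Set V := cnbr G u ∩ C

/-- `C` is a dominating set (covering code). -/
def IsDominating {V : Type*} (G : SimpleGraph V) (C : Set V) : Prop :=
  ∀ u, (iset G C u).Nonempty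

/-- `C` is a local identifying code. -/
def IsLocalID {V : Type*} (G : SimpleGraph V) (C : Set V) : Prop :=
  IsDominating G C ∧ ∀ u v, G.Adj u v → iset G C u ≠ iset G C v

/-- `C` is a local locating-dominating code. -/
def IsLocalLD {V : Type*} (G : SimpleGraph V) (C : Set V) : Prop :=
  IsDominating G C ∧ ∀ u v, G.Adj u v → u ∉ C → v ∉ C → iset G C u ≠ iset G C v

/-- `C` is an identifying code. -/
def IsID {V : Type*} (G : SimpleGraph V) (C : Set V) : Prop :=
  IsDominating G C ∧ ∀ u v : V, u ≠ v → iset G C u ≠ iset G C v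

/-- `C` is a locating-dominating code. -/
def IsLD {V : Type*} (G : SimpleGraph V) (C : Set V) : Prop :=
  IsDominating G C ∧ ∀ u v : V, u ≠ v → u ∉ C → v ∉ C → iset G C u ≠ iset G C v

/-- The share of a codeword `c`. -/
noncomputable def share {V : Type*} (G : SimpleGraph V) (C : Set V) (c : V) : ℝ :=
  ∑ᶠ u ∈ cnbr G c, (1 : ℝ) / (iset G C u).ncard

/-- The binary `n`-dimensional hypercube. -/
def cube (n : ℕ) : SimpleGraph (Fin n → ZMod 2) where
  Adj x y := hammingDist x y = 1
  symm := ⟨fun x y (h : hammingDist x y = 1) => show hammingDist y x = 1 by rwa [hammingDist_comm]⟩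
  loopless := ⟨fun x (h : hammingDist x x = 1) => by rw [hammingDist_self] at h; exact absurd h (by norm_num)⟩

/-- If `C` is a local identifying code in `F_2^n` and `c` is a codeword with
`I(c) = {c}`, then `s(c) ≤ 1 + n/2`. -/
theorem stmt8 (n : ℕ) (C : Set (Fin n → ZMod 2)) (hC : IsLocalID (cube n) C)
    (c : Fin n → ZMod 2) (hc : c ∈ C) (hI : iset (cube n) C c = {c}) :
    share (cube n) C c ≤ 1 + (n : ℝ) / 2 := by
  obtain ⟨hdom, hloc⟩ := hC
  classical
  have hNfin : ((cube n).neighborSet c).Finite := Set.toFinite _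
  set N : Finset (Fin n → ZMod 2) := hNfin.toFinset with hN
  have hcN : c ∉ N := by
    simp [hN, Set.Finite.mem_toFinset, SimpleGraph.mem_neighborSet]
  have hcnbr : cnbr (cube n) c = ↑(insert c N) := by
    rw [cnbr, hN]
    simp only [Finset.coe_insert, Set.Finite.coe_toFinset]
  -- card of N ≤ n
  have hcard : N.card ≤ n := by
    have hsub : ((cube n).neighborSet c) ⊆
        (fun i : Fin n => Function.update c i (c i + 1)) '' Set.univ := by
      intro y hy
      have hdist : hammingDist c y = 1 := hy
      rw [hammingDist, Finset.card_eq_one] at hdist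
      obtain ⟨i, hi⟩ := hdist
      refine ⟨i, Set.mem_univ i, ?_⟩
      funext j
      by_cases hj : j = i
      · subst hj
        have hne : c j ≠ y j := by
          have := Finset.mem_singleton_self j
          rw [← hi, Finset.mem_filter] at this
          exact this.2
        show Function.update c j (c j + 1) j = y j
        rw [Function.update_self]
        have key : ∀ a b : ZMod 2, a ≠ b → a + 1 = b := by decide
        exact key _ _ hne
      · show Function.update c i (c i + 1) j = y j
        rw [Function.update_of_ne hj]
        by_contra hne
        have : j ∈ Finset.filter (fun j => c j ≠ y j) Finset.univ :=
          Finset.mem_filter.mpr ⟨Finset.mem_univ j, hne⟩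
        rw [hi, Finset.mem_singleton] at this
        exact hj this
    have h1 : ((cube n).neighborSet c).ncard ≤
        ((fun i : Fin n => Function.update c i (c i + 1)) '' Set.univ).ncard :=
      Set.ncard_le_ncard hsub (Set.toFinite _)
    have h2 : ((fun i : Fin n => Function.update c i (c i + 1)) '' Set.univ).ncard ≤
        (Set.univ : Set (Fin n)).ncard := Set.ncard_image_le (Set.toFinite _)
    have h3 : (Set.univ : Set (Fin n)).ncard = n := by
      rw [Set.ncard_univ]; simp
    have h4 : ((cube n).neighborSet c).ncard = N.card :=
      Set.ncard_eq_toFinset_card _ hNfin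
    omega
  -- rewrite share as a finset sum
  rw [share, hcnbr, finsum_mem_coe_finset, Finset.sum_insert hcN]
  have hterm_c : (1 : ℝ) / (iset (cube n) C c).ncard = 1 := by
    rw [hI]; simp
  rw [hterm_c]
  have hbound : ∀ u ∈ N, (1 : ℝ) / (iset (cube n) C u).ncard ≤ 1 / 2 := by
    intro u hu
    have hadj : (cube n).Adj c u := by
      rw [hN, Set.Finite.mem_toFinset] at hu; exact hu
    have hcmem : c ∈ iset (cube n) C u := ⟨Set.mem_insert_of_mem _ hadj.symm, hc⟩
    have hne : iset (cube n) C u ≠ {c} := by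
      intro h
      exact hloc c u hadj (by rw [hI, h])
    have hx : ∃ x ∈ iset (cube n) C u, x ≠ c := by
      by_contra hall
      push_neg at hall
      apply hne
      apply Set.eq_singleton_iff_unique_mem.mpr ⟨hcmem, fun x hx => hall x hx⟩
    obtain ⟨x, hxm, hxc⟩ := hx
    have h2card : 2 ≤ (iset (cube n) C u).ncard := by
      have := (Set.one_lt_ncard_iff (Set.toFinite _)).mpr ⟨x, c, hxm, hcmem, hxc⟩
      omega
    have hpos : (0 : ℝ) < (iset (cube n) C u).ncard := by positivity
    rw [div_le_div_iff₀ hpos (by norm_num)]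
    have : (2 : ℝ) ≤ (iset (cube n) C u).ncard := by exact_mod_cast h2card
    linarith
  have hsum : ∑ u ∈ N, (1 : ℝ) / (iset (cube n) C u).ncard ≤ N.card * (1 / 2) := by
    calc ∑ u ∈ N, (1 : ℝ) / (iset (cube n) C u).ncard ≤ ∑ _u ∈ N, (1 : ℝ) / 2 :=
          Finset.sum_le_sum hbound
      _ = N.card * (1 / 2) := by rw [Finset.sum_const, nsmul_eq_mul]
  have : (N.card : ℝ) ≤ n := by exact_mod_cast hcard
  linarith
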